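/- Euler's equations from the Boltzmann–Hamel equations for the free rigid body: On the open set of ℝ³ with Euler angle coordinates (ψ, θ, φ) where cos θ ≠ 0, let Ψ be the 3×3 matrix with rows (−sin θ, 0, 1), (cos θ sin φ, cos φ, 0), (cos θ cos φ, −sin φ, 0). Then Ψ is invertible with inverse Φ having rows (0, sec θ sin φ, sec θ cos φ), (0, cos φ, −sin φ), (1, tan θ sin φ, tan θ cos φ); the nonzero Hamel coefficients are exactly γ¹₂₃ = 1 = −γ¹₃₂, γ²₃₁ = 1 = −γ²₁₃, γ³₁₂ = 1 = −γ³₂₁; and for any C² curve of Euler angles with quasi-velocities u = (u₁,u₂,u₃) = Ψ q̇ and the Lagrangian ℒ(q,u) = ½(I_xx u₁² + I_yy u₂² + I_zz u₃²) with constants I_xx, I_yy, I_zz, the Boltzmann–Hamel expressions d/dt(∂ℒ/∂u_i) − (∂ℒ/∂q^j)Φ^j_i − (∂ℒ/∂u_j) γ^j_{ki} u_k equal respectively I_xx u̇₁ + (I_zz − I_yy) u₂ u₃, I_yy u̇₂ + (I_xx − I_zz) u₁ u₃, and I_zz u̇₃ + (I_yy − I_xx) u₁ u₂. -/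

import Mathlib

open Matrix Real

noncomputable section

/-- Partial derivative of `f : ℝ³ → ℝ` at `x` in the `j`-th coordinate direction. -/
def pder (f : (Fin 3 → ℝ) → ℝ) (x : Fin 3 → ℝ) (j : Fin 3) : ℝ :=
  fderiv ℝ f x (Pi.single j 1)

/-- Hamel coefficients `γ^s_{pq}(x) = (∂Ψ^s_i/∂x^j − ∂Ψ^s_j/∂x^i) Φ^i_p Φ^j_q`. -/
def hamel (Ψ Φ : (Fin 3 → ℝ) → Matrix (Fin 3) (Fin 3) ℝ)
    (x : Fin 3 → ℝ) (s p r : Fin 3) : ℝ :=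
  ∑ i, ∑ j, (pder (fun y => Ψ y s i) x j - pder (fun y => Ψ y s j) x i) * Φ x i p * Φ x j r

/-- Quasi-velocities `u^j(t) = Ψ^j_i(γ(t)) γ̇^i(t)` of a curve `γ`. -/
def cvel (Ψ : (Fin 3 → ℝ) → Matrix (Fin 3) (Fin 3) ℝ)
    (γ : ℝ → Fin 3 → ℝ) (t : ℝ) : Fin 3 → ℝ :=
  fun j => ∑ i, Ψ (γ t) j i * deriv (fun t' => γ t' i) t

/-- The quasi-velocity transformation of the free rigid body in Type-I Euler angles
`q = (ψ, θ, φ)`: the quasi-velocities are the body components of angular velocity. -/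
def ΨRB (q : Fin 3 → ℝ) : Matrix (Fin 3) (Fin 3) ℝ :=
  !![-sin (q 1), 0, 1;
     cos (q 1) * sin (q 2), cos (q 2), 0;
     cos (q 1) * cos (q 2), -sin (q 2), 0]

/-- The claimed inverse (`sec θ = 1/cos θ`, `tan θ = sin θ/cos θ`). -/
def ΦRB (q : Fin 3 → ℝ) : Matrix (Fin 3) (Fin 3) ℝ :=
  !![0, (1 / cos (q 1)) * sin (q 2), (1 / cos (q 1)) * cos (q 2);
     0, cos (q 2), -sin (q 2);
     1, (sin (q 1) / cos (q 1)) * sin (q 2), (sin (q 1) / cos (q 1)) * cos (q 2)]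

/-- The rigid-body Lagrangian in quasi-velocities:
`ℒ(q,u) = ½(I_xx u₁² + I_yy u₂² + I_zz u₃²)`. -/
def LagRB (Ix Iy Iz : ℝ) (x u : Fin 3 → ℝ) : ℝ :=
  (Ix * (u 0) ^ 2 + Iy * (u 1) ^ 2 + Iz * (u 2) ^ 2) / 2


lemma pder_single (g : ℝ → ℝ) (g' : ℝ) (k : Fin 3) (x : Fin 3 → ℝ) (j : Fin 3)
    (hg : HasDerivAt g g' (x k)) :
    pder (fun y => g (y k)) x j = if k = j then g' else 0 := by
  have h := hg.comp_hasFDerivAt x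
    (ContinuousLinearMap.proj (R := ℝ) (φ := fun _ : Fin 3 => ℝ) k).hasFDerivAt
  simp only [Function.comp_def, ContinuousLinearMap.proj_apply] at h
  unfold pder
  rw [h.fderiv]
  simp [Pi.single_apply]

lemma pder_mul2 (g h : ℝ → ℝ) (g' h' : ℝ) (x : Fin 3 → ℝ) (j : Fin 3)
    (hg : HasDerivAt g g' (x 1)) (hh : HasDerivAt h h' (x 2)) :
    pder (fun y => g (y 1) * h (y 2)) x j =
      (if (1 : Fin 3) = j then g' * h (x 2) else 0)
      + (if (2 : Fin 3) = j then g (x 1) * h' else 0) := by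
  have h1 := hg.comp_hasFDerivAt x
    (ContinuousLinearMap.proj (R := ℝ) (φ := fun _ : Fin 3 => ℝ) 1).hasFDerivAt
  have h2 := hh.comp_hasFDerivAt x
    (ContinuousLinearMap.proj (R := ℝ) (φ := fun _ : Fin 3 => ℝ) 2).hasFDerivAt
  have h3 := h1.mul h2
  simp only [Function.comp_def, ContinuousLinearMap.proj_apply, Pi.mul_def] at h3
  unfold pder
  rw [h3.fderiv]
  fin_cases j <;> simp [Fin.ext_iff] <;> ring

lemma pdΨ00 (x : Fin 3 → ℝ) (j : Fin 3) :
    pder (fun y => -sin (y 1)) x j = if (1 : Fin 3) = j then -cos (x 1) else 0 :=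
  pder_single (fun a => -sin a) (-cos (x 1)) 1 x j ((Real.hasDerivAt_sin (x 1)).neg)

lemma pdΨ10 (x : Fin 3 → ℝ) (j : Fin 3) :
    pder (fun y => cos (y 1) * sin (y 2)) x j =
      (if (1 : Fin 3) = j then -sin (x 1) * sin (x 2) else 0)
      + (if (2 : Fin 3) = j then cos (x 1) * cos (x 2) else 0) :=
  pder_mul2 cos sin (-sin (x 1)) (cos (x 2)) x j (Real.hasDerivAt_cos (x 1))
    (Real.hasDerivAt_sin (x 2))

lemma pdΨ20 (x : Fin 3 → ℝ) (j : Fin 3) :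
    pder (fun y => cos (y 1) * cos (y 2)) x j =
      (if (1 : Fin 3) = j then -sin (x 1) * cos (x 2) else 0)
      + (if (2 : Fin 3) = j then cos (x 1) * -sin (x 2) else 0) :=
  pder_mul2 cos cos (-sin (x 1)) (-sin (x 2)) x j (Real.hasDerivAt_cos (x 1))
    (Real.hasDerivAt_cos (x 2))

lemma pdΨ11 (x : Fin 3 → ℝ) (j : Fin 3) :
    pder (fun y => cos (y 2)) x j = if (2 : Fin 3) = j then -sin (x 2) else 0 :=
  pder_single cos (-sin (x 2)) 2 x j (Real.hasDerivAt_cos (x 2))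

lemma pdΨ21 (x : Fin 3 → ℝ) (j : Fin 3) :
    pder (fun y => -sin (y 2)) x j = if (2 : Fin 3) = j then -cos (x 2) else 0 :=
  pder_single (fun a => -sin a) (-cos (x 2)) 2 x j ((Real.hasDerivAt_sin (x 2)).neg)

lemma pd_const (c : ℝ) (x : Fin 3 → ℝ) (j : Fin 3) : pder (fun _ => c) x j = 0 := by
  simp [pder]

lemma ham000 (q : Fin 3 → ℝ) (h : cos (q 1) ≠ 0) :
    hamel ΨRB ΦRB q 0 0 0 = 0 := by
  simp only [hamel, Fin.sum_univ_three, ΨRB, ΦRB, Matrix.of_apply, Matrix.cons_val',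
    Matrix.cons_val_zero, Matrix.cons_val_one, Matrix.head_cons, Matrix.empty_val',
    Matrix.cons_val_fin_one, Matrix.head_fin_const, Matrix.cons_val_two, Matrix.tail_cons]
  simp only [pdΨ00, pdΨ10, pdΨ20, pdΨ11, pdΨ21, pd_const, Fin.ext_iff]
  norm_num
  try field_simp
  try ring_nf
  try simp only [Real.sin_sq]
  try ring_nf
  try ring

lemma ham001 (q : Fin 3 → ℝ) (h : cos (q 1) ≠ 0) :
    hamel ΨRB ΦRB q 0 0 1 = 0 := by
  simp only [hamel, Fin.sum_univ_three, ΨRB, ΦRB, Matrix.of_apply, Matrix.cons_val',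
    Matrix.cons_val_zero, Matrix.cons_val_one, Matrix.head_cons, Matrix.empty_val',
    Matrix.cons_val_fin_one, Matrix.head_fin_const, Matrix.cons_val_two, Matrix.tail_cons]
  simp only [pdΨ00, pdΨ10, pdΨ20, pdΨ11, pdΨ21, pd_const, Fin.ext_iff]
  norm_num
  try field_simp
  try ring_nf
  try simp only [Real.sin_sq]
  try ring_nf
  try ring

lemma ham002 (q : Fin 3 → ℝ) (h : cos (q 1) ≠ 0) :
    hamel ΨRB ΦRB q 0 0 2 = 0 := by
  simp only [hamel, Fin.sum_univ_three, ΨRB, ΦRB, Matrix.of_apply, Matrix.cons_val',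
    Matrix.cons_val_zero, Matrix.cons_val_one, Matrix.head_cons, Matrix.empty_val',
    Matrix.cons_val_fin_one, Matrix.head_fin_const, Matrix.cons_val_two, Matrix.tail_cons]
  simp only [pdΨ00, pdΨ10, pdΨ20, pdΨ11, pdΨ21, pd_const, Fin.ext_iff]
  norm_num
  try field_simp
  try ring_nf
  try simp only [Real.sin_sq]
  try ring_nf
  try ring

lemma ham010 (q : Fin 3 → ℝ) (h : cos (q 1) ≠ 0) :
    hamel ΨRB ΦRB q 0 1 0 = 0 := by
  simp only [hamel, Fin.sum_univ_three, ΨRB, ΦRB, Matrix.of_apply, Matrix.cons_val',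
    Matrix.cons_val_zero, Matrix.cons_val_one, Matrix.head_cons, Matrix.empty_val',
    Matrix.cons_val_fin_one, Matrix.head_fin_const, Matrix.cons_val_two, Matrix.tail_cons]
  simp only [pdΨ00, pdΨ10, pdΨ20, pdΨ11, pdΨ21, pd_const, Fin.ext_iff]
  norm_num
  try field_simp
  try ring_nf
  try simp only [Real.sin_sq]
  try ring_nf
  try ring

lemma ham011 (q : Fin 3 → ℝ) (h : cos (q 1) ≠ 0) :
    hamel ΨRB ΦRB q 0 1 1 = 0 := by
  simp only [hamel, Fin.sum_univ_three, ΨRB, ΦRB, Matrix.of_apply, Matrix.cons_val',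
    Matrix.cons_val_zero, Matrix.cons_val_one, Matrix.head_cons, Matrix.empty_val',
    Matrix.cons_val_fin_one, Matrix.head_fin_const, Matrix.cons_val_two, Matrix.tail_cons]
  simp only [pdΨ00, pdΨ10, pdΨ20, pdΨ11, pdΨ21, pd_const, Fin.ext_iff]
  norm_num
  try field_simp
  try ring_nf
  try simp only [Real.sin_sq]
  try ring_nf
  try ring

lemma ham012 (q : Fin 3 → ℝ) (h : cos (q 1) ≠ 0) :
    hamel ΨRB ΦRB q 0 1 2 = 1 := by
  simp only [hamel, Fin.sum_univ_three, ΨRB, ΦRB, Matrix.of_apply, Matrix.cons_val',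
    Matrix.cons_val_zero, Matrix.cons_val_one, Matrix.head_cons, Matrix.empty_val',
    Matrix.cons_val_fin_one, Matrix.head_fin_const, Matrix.cons_val_two, Matrix.tail_cons]
  simp only [pdΨ00, pdΨ10, pdΨ20, pdΨ11, pdΨ21, pd_const, Fin.ext_iff]
  norm_num
  try field_simp
  try ring_nf
  try simp only [Real.sin_sq]
  try ring_nf
  try ring

lemma ham020 (q : Fin 3 → ℝ) (h : cos (q 1) ≠ 0) :
    hamel ΨRB ΦRB q 0 2 0 = 0 := by
  simp only [hamel, Fin.sum_univ_three, ΨRB, ΦRB, Matrix.of_apply, Matrix.cons_val',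
    Matrix.cons_val_zero, Matrix.cons_val_one, Matrix.head_cons, Matrix.empty_val',
    Matrix.cons_val_fin_one, Matrix.head_fin_const, Matrix.cons_val_two, Matrix.tail_cons]
  simp only [pdΨ00, pdΨ10, pdΨ20, pdΨ11, pdΨ21, pd_const, Fin.ext_iff]
  norm_num
  try field_simp
  try ring_nf
  try simp only [Real.sin_sq]
  try ring_nf
  try ring

lemma ham021 (q : Fin 3 → ℝ) (h : cos (q 1) ≠ 0) :
    hamel ΨRB ΦRB q 0 2 1 = -1 := by
  simp only [hamel, Fin.sum_univ_three, ΨRB, ΦRB, Matrix.of_apply, Matrix.cons_val',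
    Matrix.cons_val_zero, Matrix.cons_val_one, Matrix.head_cons, Matrix.empty_val',
    Matrix.cons_val_fin_one, Matrix.head_fin_const, Matrix.cons_val_two, Matrix.tail_cons]
  simp only [pdΨ00, pdΨ10, pdΨ20, pdΨ11, pdΨ21, pd_const, Fin.ext_iff]
  norm_num
  try field_simp
  try ring_nf
  try simp only [Real.sin_sq]
  try ring_nf
  try ring

lemma ham022 (q : Fin 3 → ℝ) (h : cos (q 1) ≠ 0) :
    hamel ΨRB ΦRB q 0 2 2 = 0 := by
  simp only [hamel, Fin.sum_univ_three, ΨRB, ΦRB, Matrix.of_apply, Matrix.cons_val',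
    Matrix.cons_val_zero, Matrix.cons_val_one, Matrix.head_cons, Matrix.empty_val',
    Matrix.cons_val_fin_one, Matrix.head_fin_const, Matrix.cons_val_two, Matrix.tail_cons]
  simp only [pdΨ00, pdΨ10, pdΨ20, pdΨ11, pdΨ21, pd_const, Fin.ext_iff]
  norm_num
  try field_simp
  try ring_nf
  try simp only [Real.sin_sq]
  try ring_nf
  try ring

lemma ham100 (q : Fin 3 → ℝ) (h : cos (q 1) ≠ 0) :
    hamel ΨRB ΦRB q 1 0 0 = 0 := by
  simp only [hamel, Fin.sum_univ_three, ΨRB, ΦRB, Matrix.of_apply, Matrix.cons_val',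
    Matrix.cons_val_zero, Matrix.cons_val_one, Matrix.head_cons, Matrix.empty_val',
    Matrix.cons_val_fin_one, Matrix.head_fin_const, Matrix.cons_val_two, Matrix.tail_cons]
  simp only [pdΨ00, pdΨ10, pdΨ20, pdΨ11, pdΨ21, pd_const, Fin.ext_iff]
  norm_num
  try field_simp
  try ring_nf
  try simp only [Real.sin_sq]
  try ring_nf
  try ring

lemma ham101 (q : Fin 3 → ℝ) (h : cos (q 1) ≠ 0) :
    hamel ΨRB ΦRB q 1 0 1 = 0 := by
  simp only [hamel, Fin.sum_univ_three, ΨRB, ΦRB, Matrix.of_apply, Matrix.cons_val',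
    Matrix.cons_val_zero, Matrix.cons_val_one, Matrix.head_cons, Matrix.empty_val',
    Matrix.cons_val_fin_one, Matrix.head_fin_const, Matrix.cons_val_two, Matrix.tail_cons]
  simp only [pdΨ00, pdΨ10, pdΨ20, pdΨ11, pdΨ21, pd_const, Fin.ext_iff]
  norm_num
  try field_simp
  try ring_nf
  try simp only [Real.sin_sq]
  try ring_nf
  try ring

lemma ham102 (q : Fin 3 → ℝ) (h : cos (q 1) ≠ 0) :
    hamel ΨRB ΦRB q 1 0 2 = -1 := by
  simp only [hamel, Fin.sum_univ_three, ΨRB, ΦRB, Matrix.of_apply, Matrix.cons_val',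
    Matrix.cons_val_zero, Matrix.cons_val_one, Matrix.head_cons, Matrix.empty_val',
    Matrix.cons_val_fin_one, Matrix.head_fin_const, Matrix.cons_val_two, Matrix.tail_cons]
  simp only [pdΨ00, pdΨ10, pdΨ20, pdΨ11, pdΨ21, pd_const, Fin.ext_iff]
  norm_num
  try field_simp
  try ring_nf
  try simp only [Real.sin_sq]
  try ring_nf
  try ring

lemma ham110 (q : Fin 3 → ℝ) (h : cos (q 1) ≠ 0) :
    hamel ΨRB ΦRB q 1 1 0 = 0 := by
  simp only [hamel, Fin.sum_univ_three, ΨRB, ΦRB, Matrix.of_apply, Matrix.cons_val',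
    Matrix.cons_val_zero, Matrix.cons_val_one, Matrix.head_cons, Matrix.empty_val',
    Matrix.cons_val_fin_one, Matrix.head_fin_const, Matrix.cons_val_two, Matrix.tail_cons]
  simp only [pdΨ00, pdΨ10, pdΨ20, pdΨ11, pdΨ21, pd_const, Fin.ext_iff]
  norm_num
  try field_simp
  try ring_nf
  try simp only [Real.sin_sq]
  try ring_nf
  try ring

lemma ham111 (q : Fin 3 → ℝ) (h : cos (q 1) ≠ 0) :
    hamel ΨRB ΦRB q 1 1 1 = 0 := by
  simp only [hamel, Fin.sum_univ_three, ΨRB, ΦRB, Matrix.of_apply, Matrix.cons_val',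
    Matrix.cons_val_zero, Matrix.cons_val_one, Matrix.head_cons, Matrix.empty_val',
    Matrix.cons_val_fin_one, Matrix.head_fin_const, Matrix.cons_val_two, Matrix.tail_cons]
  simp only [pdΨ00, pdΨ10, pdΨ20, pdΨ11, pdΨ21, pd_const, Fin.ext_iff]
  norm_num
  try field_simp
  try ring_nf
  try simp only [Real.sin_sq]
  try ring_nf
  try ring

lemma ham112 (q : Fin 3 → ℝ) (h : cos (q 1) ≠ 0) :
    hamel ΨRB ΦRB q 1 1 2 = 0 := by
  simp only [hamel, Fin.sum_univ_three, ΨRB, ΦRB, Matrix.of_apply, Matrix.cons_val',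
    Matrix.cons_val_zero, Matrix.cons_val_one, Matrix.head_cons, Matrix.empty_val',
    Matrix.cons_val_fin_one, Matrix.head_fin_const, Matrix.cons_val_two, Matrix.tail_cons]
  simp only [pdΨ00, pdΨ10, pdΨ20, pdΨ11, pdΨ21, pd_const, Fin.ext_iff]
  norm_num
  try field_simp
  try ring_nf
  try simp only [Real.sin_sq]
  try ring_nf
  try ring

lemma ham120 (q : Fin 3 → ℝ) (h : cos (q 1) ≠ 0) :
    hamel ΨRB ΦRB q 1 2 0 = 1 := by
  simp only [hamel, Fin.sum_univ_three, ΨRB, ΦRB, Matrix.of_apply, Matrix.cons_val',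
    Matrix.cons_val_zero, Matrix.cons_val_one, Matrix.head_cons, Matrix.empty_val',
    Matrix.cons_val_fin_one, Matrix.head_fin_const, Matrix.cons_val_two, Matrix.tail_cons]
  simp only [pdΨ00, pdΨ10, pdΨ20, pdΨ11, pdΨ21, pd_const, Fin.ext_iff]
  norm_num
  try field_simp
  try ring_nf
  try simp only [Real.sin_sq]
  try ring_nf
  try ring

lemma ham121 (q : Fin 3 → ℝ) (h : cos (q 1) ≠ 0) :
    hamel ΨRB ΦRB q 1 2 1 = 0 := by
  simp only [hamel, Fin.sum_univ_three, ΨRB, ΦRB, Matrix.of_apply, Matrix.cons_val',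
    Matrix.cons_val_zero, Matrix.cons_val_one, Matrix.head_cons, Matrix.empty_val',
    Matrix.cons_val_fin_one, Matrix.head_fin_const, Matrix.cons_val_two, Matrix.tail_cons]
  simp only [pdΨ00, pdΨ10, pdΨ20, pdΨ11, pdΨ21, pd_const, Fin.ext_iff]
  norm_num
  try field_simp
  try ring_nf
  try simp only [Real.sin_sq]
  try ring_nf
  try ring

lemma ham122 (q : Fin 3 → ℝ) (h : cos (q 1) ≠ 0) :
    hamel ΨRB ΦRB q 1 2 2 = 0 := by
  simp only [hamel, Fin.sum_univ_three, ΨRB, ΦRB, Matrix.of_apply, Matrix.cons_val',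
    Matrix.cons_val_zero, Matrix.cons_val_one, Matrix.head_cons, Matrix.empty_val',
    Matrix.cons_val_fin_one, Matrix.head_fin_const, Matrix.cons_val_two, Matrix.tail_cons]
  simp only [pdΨ00, pdΨ10, pdΨ20, pdΨ11, pdΨ21, pd_const, Fin.ext_iff]
  norm_num
  try field_simp
  try ring_nf
  try simp only [Real.sin_sq]
  try ring_nf
  try ring

lemma ham200 (q : Fin 3 → ℝ) (h : cos (q 1) ≠ 0) :
    hamel ΨRB ΦRB q 2 0 0 = 0 := by
  simp only [hamel, Fin.sum_univ_three, ΨRB, ΦRB, Matrix.of_apply, Matrix.cons_val',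
    Matrix.cons_val_zero, Matrix.cons_val_one, Matrix.head_cons, Matrix.empty_val',
    Matrix.cons_val_fin_one, Matrix.head_fin_const, Matrix.cons_val_two, Matrix.tail_cons]
  simp only [pdΨ00, pdΨ10, pdΨ20, pdΨ11, pdΨ21, pd_const, Fin.ext_iff]
  norm_num
  try field_simp
  try ring_nf
  try simp only [Real.sin_sq]
  try ring_nf
  try ring

lemma ham201 (q : Fin 3 → ℝ) (h : cos (q 1) ≠ 0) :
    hamel ΨRB ΦRB q 2 0 1 = 1 := by
  simp only [hamel, Fin.sum_univ_three, ΨRB, ΦRB, Matrix.of_apply, Matrix.cons_val',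
    Matrix.cons_val_zero, Matrix.cons_val_one, Matrix.head_cons, Matrix.empty_val',
    Matrix.cons_val_fin_one, Matrix.head_fin_const, Matrix.cons_val_two, Matrix.tail_cons]
  simp only [pdΨ00, pdΨ10, pdΨ20, pdΨ11, pdΨ21, pd_const, Fin.ext_iff]
  norm_num
  try field_simp
  try ring_nf
  try simp only [Real.sin_sq]
  try ring_nf
  try ring

lemma ham202 (q : Fin 3 → ℝ) (h : cos (q 1) ≠ 0) :
    hamel ΨRB ΦRB q 2 0 2 = 0 := by
  simp only [hamel, Fin.sum_univ_three, ΨRB, ΦRB, Matrix.of_apply, Matrix.cons_val',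
    Matrix.cons_val_zero, Matrix.cons_val_one, Matrix.head_cons, Matrix.empty_val',
    Matrix.cons_val_fin_one, Matrix.head_fin_const, Matrix.cons_val_two, Matrix.tail_cons]
  simp only [pdΨ00, pdΨ10, pdΨ20, pdΨ11, pdΨ21, pd_const, Fin.ext_iff]
  norm_num
  try field_simp
  try ring_nf
  try simp only [Real.sin_sq]
  try ring_nf
  try ring

lemma ham210 (q : Fin 3 → ℝ) (h : cos (q 1) ≠ 0) :
    hamel ΨRB ΦRB q 2 1 0 = -1 := by
  simp only [hamel, Fin.sum_univ_three, ΨRB, ΦRB, Matrix.of_apply, Matrix.cons_val',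
    Matrix.cons_val_zero, Matrix.cons_val_one, Matrix.head_cons, Matrix.empty_val',
    Matrix.cons_val_fin_one, Matrix.head_fin_const, Matrix.cons_val_two, Matrix.tail_cons]
  simp only [pdΨ00, pdΨ10, pdΨ20, pdΨ11, pdΨ21, pd_const, Fin.ext_iff]
  norm_num
  try field_simp
  try ring_nf
  try simp only [Real.sin_sq]
  try ring_nf
  try ring

lemma ham211 (q : Fin 3 → ℝ) (h : cos (q 1) ≠ 0) :
    hamel ΨRB ΦRB q 2 1 1 = 0 := by
  simp only [hamel, Fin.sum_univ_three, ΨRB, ΦRB, Matrix.of_apply, Matrix.cons_val',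
    Matrix.cons_val_zero, Matrix.cons_val_one, Matrix.head_cons, Matrix.empty_val',
    Matrix.cons_val_fin_one, Matrix.head_fin_const, Matrix.cons_val_two, Matrix.tail_cons]
  simp only [pdΨ00, pdΨ10, pdΨ20, pdΨ11, pdΨ21, pd_const, Fin.ext_iff]
  norm_num
  try field_simp
  try ring_nf
  try simp only [Real.sin_sq]
  try ring_nf
  try ring

lemma ham212 (q : Fin 3 → ℝ) (h : cos (q 1) ≠ 0) :
    hamel ΨRB ΦRB q 2 1 2 = 0 := by
  simp only [hamel, Fin.sum_univ_three, ΨRB, ΦRB, Matrix.of_apply, Matrix.cons_val',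
    Matrix.cons_val_zero, Matrix.cons_val_one, Matrix.head_cons, Matrix.empty_val',
    Matrix.cons_val_fin_one, Matrix.head_fin_const, Matrix.cons_val_two, Matrix.tail_cons]
  simp only [pdΨ00, pdΨ10, pdΨ20, pdΨ11, pdΨ21, pd_const, Fin.ext_iff]
  norm_num
  try field_simp
  try ring_nf
  try simp only [Real.sin_sq]
  try ring_nf
  try ring

lemma ham220 (q : Fin 3 → ℝ) (h : cos (q 1) ≠ 0) :
    hamel ΨRB ΦRB q 2 2 0 = 0 := by
  simp only [hamel, Fin.sum_univ_three, ΨRB, ΦRB, Matrix.of_apply, Matrix.cons_val',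
    Matrix.cons_val_zero, Matrix.cons_val_one, Matrix.head_cons, Matrix.empty_val',
    Matrix.cons_val_fin_one, Matrix.head_fin_const, Matrix.cons_val_two, Matrix.tail_cons]
  simp only [pdΨ00, pdΨ10, pdΨ20, pdΨ11, pdΨ21, pd_const, Fin.ext_iff]
  norm_num
  try field_simp
  try ring_nf
  try simp only [Real.sin_sq]
  try ring_nf
  try ring

lemma ham221 (q : Fin 3 → ℝ) (h : cos (q 1) ≠ 0) :
    hamel ΨRB ΦRB q 2 2 1 = 0 := by
  simp only [hamel, Fin.sum_univ_three, ΨRB, ΦRB, Matrix.of_apply, Matrix.cons_val',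
    Matrix.cons_val_zero, Matrix.cons_val_one, Matrix.head_cons, Matrix.empty_val',
    Matrix.cons_val_fin_one, Matrix.head_fin_const, Matrix.cons_val_two, Matrix.tail_cons]
  simp only [pdΨ00, pdΨ10, pdΨ20, pdΨ11, pdΨ21, pd_const, Fin.ext_iff]
  norm_num
  try field_simp
  try ring_nf
  try simp only [Real.sin_sq]
  try ring_nf
  try ring

lemma ham222 (q : Fin 3 → ℝ) (h : cos (q 1) ≠ 0) :
    hamel ΨRB ΦRB q 2 2 2 = 0 := by
  simp only [hamel, Fin.sum_univ_three, ΨRB, ΦRB, Matrix.of_apply, Matrix.cons_val',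
    Matrix.cons_val_zero, Matrix.cons_val_one, Matrix.head_cons, Matrix.empty_val',
    Matrix.cons_val_fin_one, Matrix.head_fin_const, Matrix.cons_val_two, Matrix.tail_cons]
  simp only [pdΨ00, pdΨ10, pdΨ20, pdΨ11, pdΨ21, pd_const, Fin.ext_iff]
  norm_num
  try field_simp
  try ring_nf
  try simp only [Real.sin_sq]
  try ring_nf
  try ring

lemma hamel_eq (q : Fin 3 → ℝ) (h : cos (q 1) ≠ 0) (s p w : Fin 3) :
      hamel ΨRB ΦRB q s p w =
        if s = 0 ∧ p = 1 ∧ w = 2 then 1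
        else if s = 0 ∧ p = 2 ∧ w = 1 then -1
        else if s = 1 ∧ p = 2 ∧ w = 0 then 1
        else if s = 1 ∧ p = 0 ∧ w = 2 then -1
        else if s = 2 ∧ p = 0 ∧ w = 1 then 1
        else if s = 2 ∧ p = 1 ∧ w = 0 then -1
        else 0 := by
  fin_cases s <;> fin_cases p <;> fin_cases w
  · exact (ham000 q h).trans (by norm_num [Fin.ext_iff])
  · exact (ham001 q h).trans (by norm_num [Fin.ext_iff])
  · exact (ham002 q h).trans (by norm_num [Fin.ext_iff])
  · exact (ham010 q h).trans (by norm_num [Fin.ext_iff])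
  · exact (ham011 q h).trans (by norm_num [Fin.ext_iff])
  · exact (ham012 q h).trans (by norm_num [Fin.ext_iff])
  · exact (ham020 q h).trans (by norm_num [Fin.ext_iff])
  · exact (ham021 q h).trans (by norm_num [Fin.ext_iff])
  · exact (ham022 q h).trans (by norm_num [Fin.ext_iff])
  · exact (ham100 q h).trans (by norm_num [Fin.ext_iff])
  · exact (ham101 q h).trans (by norm_num [Fin.ext_iff])
  · exact (ham102 q h).trans (by norm_num [Fin.ext_iff])
  · exact (ham110 q h).trans (by norm_num [Fin.ext_iff])
  · exact (ham111 q h).trans (by norm_num [Fin.ext_iff])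
  · exact (ham112 q h).trans (by norm_num [Fin.ext_iff])
  · exact (ham120 q h).trans (by norm_num [Fin.ext_iff])
  · exact (ham121 q h).trans (by norm_num [Fin.ext_iff])
  · exact (ham122 q h).trans (by norm_num [Fin.ext_iff])
  · exact (ham200 q h).trans (by norm_num [Fin.ext_iff])
  · exact (ham201 q h).trans (by norm_num [Fin.ext_iff])
  · exact (ham202 q h).trans (by norm_num [Fin.ext_iff])
  · exact (ham210 q h).trans (by norm_num [Fin.ext_iff])
  · exact (ham211 q h).trans (by norm_num [Fin.ext_iff])
  · exact (ham212 q h).trans (by norm_num [Fin.ext_iff])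
  · exact (ham220 q h).trans (by norm_num [Fin.ext_iff])
  · exact (ham221 q h).trans (by norm_num [Fin.ext_iff])
  · exact (ham222 q h).trans (by norm_num [Fin.ext_iff])


lemma pderLq (Ix Iy Iz : ℝ) (u x : Fin 3 → ℝ) (j : Fin 3) :
    pder (fun y => LagRB Ix Iy Iz y u) x j = 0 := by
  simp [pder, LagRB]

lemma pderL (Ix Iy Iz : ℝ) (x u : Fin 3 → ℝ) (j : Fin 3) :
    pder (LagRB Ix Iy Iz x) u j =
      if j = 0 then Ix * u 0 else if j = 1 then Iy * u 1 else Iz * u 2 := by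
  have h0 := ((hasDerivAt_pow 2 (u 0)).const_mul Ix).comp_hasFDerivAt u
    (ContinuousLinearMap.proj (R := ℝ) (φ := fun _ : Fin 3 => ℝ) 0).hasFDerivAt
  have h1 := ((hasDerivAt_pow 2 (u 1)).const_mul Iy).comp_hasFDerivAt u
    (ContinuousLinearMap.proj (R := ℝ) (φ := fun _ : Fin 3 => ℝ) 1).hasFDerivAt
  have h2 := ((hasDerivAt_pow 2 (u 2)).const_mul Iz).comp_hasFDerivAt u
    (ContinuousLinearMap.proj (R := ℝ) (φ := fun _ : Fin 3 => ℝ) 2).hasFDerivAt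
  have H := ((h0.add h1).add h2).mul_const (2⁻¹ : ℝ)
  simp only [Function.comp_def, ContinuousLinearMap.proj_apply] at H
  have H' : HasFDerivAt (LagRB Ix Iy Iz x) _ u := H
  unfold pder
  rw [H'.fderiv]
  simp [Pi.single_apply]
  fin_cases j <;> norm_num [Fin.ext_iff] <;> ring

lemma comp_contDiff (γ : ℝ → Fin 3 → ℝ) (hγ : ContDiff ℝ 2 γ) (i : Fin 3) :
    ContDiff ℝ 2 (fun t => γ t i) :=
  (ContinuousLinearMap.proj (R := ℝ) (φ := fun _ : Fin 3 => ℝ) i).contDiff.comp hγ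

lemma deriv_diff (γ : ℝ → Fin 3 → ℝ) (hγ : ContDiff ℝ 2 γ) (i : Fin 3) :
    Differentiable ℝ (fun t => deriv (fun t' => γ t' i) t) := by
  have h2 : ContDiff ℝ 2 (fun t => γ t i) := comp_contDiff γ hγ i
  rw [show (2 : WithTop ℕ∞) = 1 + 1 by norm_num, contDiff_succ_iff_deriv] at h2
  exact h2.2.2.differentiable (by norm_num)

lemma cvel_diff (γ : ℝ → Fin 3 → ℝ) (hγ : ContDiff ℝ 2 γ) (j : Fin 3) :
    Differentiable ℝ (fun t' => cvel ΨRB γ t' j) := by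
  have hc : ∀ i : Fin 3, Differentiable ℝ (fun t => γ t i) :=
    fun i => (comp_contDiff γ hγ i).differentiable (by norm_num)
  have hd := deriv_diff γ hγ
  have h0 : Differentiable ℝ (fun t' => cvel ΨRB γ t' 0) := by
    simp only [cvel, Fin.sum_univ_three, ΨRB, Matrix.of_apply, Matrix.cons_val',
      Matrix.cons_val_zero, Matrix.cons_val_one, Matrix.head_cons, Matrix.cons_val_two,
      Matrix.tail_cons, Matrix.head_fin_const, Matrix.empty_val', Matrix.cons_val_fin_one]
    exact (((hc 1).sin.neg.mul (hd 0)).add ((differentiable_const 0).mul (hd 1))).add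
      ((differentiable_const 1).mul (hd 2))
  have h1 : Differentiable ℝ (fun t' => cvel ΨRB γ t' 1) := by
    simp only [cvel, Fin.sum_univ_three, ΨRB, Matrix.of_apply, Matrix.cons_val',
      Matrix.cons_val_zero, Matrix.cons_val_one, Matrix.head_cons, Matrix.cons_val_two,
      Matrix.tail_cons, Matrix.head_fin_const, Matrix.empty_val', Matrix.cons_val_fin_one]
    exact ((((hc 1).cos.mul (hc 2).sin).mul (hd 0)).add ((hc 2).cos.mul (hd 1))).add
      ((differentiable_const 0).mul (hd 2))
  have h2 : Differentiable ℝ (fun t' => cvel ΨRB γ t' 2) := by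
    simp only [cvel, Fin.sum_univ_three, ΨRB, Matrix.of_apply, Matrix.cons_val',
      Matrix.cons_val_zero, Matrix.cons_val_one, Matrix.head_cons, Matrix.cons_val_two,
      Matrix.tail_cons, Matrix.head_fin_const, Matrix.empty_val', Matrix.cons_val_fin_one]
    exact ((((hc 1).cos.mul (hc 2).cos).mul (hd 0)).add (((hc 2).sin.neg).mul (hd 1))).add
      ((differentiable_const 0).mul (hd 2))
  fin_cases j <;> assumption

/-- **Euler's equations from the Boltzmann–Hamel equations for the free rigid body.**
On the set `cos θ ≠ 0`: `ΦRB` is the pointwise inverse of `ΨRB`; the nonzero Hamel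
coefficients are exactly `γ¹₂₃ = 1 = −γ¹₃₂`, `γ²₃₁ = 1 = −γ²₁₃`, `γ³₁₂ = 1 = −γ³₂₁`
(0-based: `γ¹₂₃` is `hamel ΨRB ΦRB q 0 1 2`); and along any C² curve of Euler angles the
Boltzmann–Hamel expressions give Euler's equations. -/
theorem rigid_body_boltzmann_hamel_euler (Ix Iy Iz : ℝ)
    (hIx : 0 < Ix) (hIy : 0 < Iy) (hIz : 0 < Iz) :
    (∀ q : Fin 3 → ℝ, cos (q 1) ≠ 0 → ΨRB q * ΦRB q = 1 ∧ ΦRB q * ΨRB q = 1) ∧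
    (∀ q : Fin 3 → ℝ, cos (q 1) ≠ 0 → ∀ s p w : Fin 3,
      hamel ΨRB ΦRB q s p w =
        if s = 0 ∧ p = 1 ∧ w = 2 then 1
        else if s = 0 ∧ p = 2 ∧ w = 1 then -1
        else if s = 1 ∧ p = 2 ∧ w = 0 then 1
        else if s = 1 ∧ p = 0 ∧ w = 2 then -1
        else if s = 2 ∧ p = 0 ∧ w = 1 then 1
        else if s = 2 ∧ p = 1 ∧ w = 0 then -1
        else 0) ∧
    (∀ γ : ℝ → Fin 3 → ℝ, ContDiff ℝ 2 γ → (∀ t, cos (γ t 1) ≠ 0) → ∀ t,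
      (deriv (fun t' => pder (LagRB Ix Iy Iz (γ t')) (cvel ΨRB γ t') 0) t
        - (∑ j, pder (fun y => LagRB Ix Iy Iz y (cvel ΨRB γ t)) (γ t) j * ΦRB (γ t) j 0)
        - (∑ j, ∑ k, pder (LagRB Ix Iy Iz (γ t)) (cvel ΨRB γ t) j
            * hamel ΨRB ΦRB (γ t) j k 0 * cvel ΨRB γ t k)
        = Ix * deriv (fun t' => cvel ΨRB γ t' 0) t
            + (Iz - Iy) * cvel ΨRB γ t 1 * cvel ΨRB γ t 2) ∧
      (deriv (fun t' => pder (LagRB Ix Iy Iz (γ t')) (cvel ΨRB γ t') 1) t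
        - (∑ j, pder (fun y => LagRB Ix Iy Iz y (cvel ΨRB γ t)) (γ t) j * ΦRB (γ t) j 1)
        - (∑ j, ∑ k, pder (LagRB Ix Iy Iz (γ t)) (cvel ΨRB γ t) j
            * hamel ΨRB ΦRB (γ t) j k 1 * cvel ΨRB γ t k)
        = Iy * deriv (fun t' => cvel ΨRB γ t' 1) t
            + (Ix - Iz) * cvel ΨRB γ t 0 * cvel ΨRB γ t 2) ∧
      (deriv (fun t' => pder (LagRB Ix Iy Iz (γ t')) (cvel ΨRB γ t') 2) t
        - (∑ j, pder (fun y => LagRB Ix Iy Iz y (cvel ΨRB γ t)) (γ t) j * ΦRB (γ t) j 2)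
        - (∑ j, ∑ k, pder (LagRB Ix Iy Iz (γ t)) (cvel ΨRB γ t) j
            * hamel ΨRB ΦRB (γ t) j k 2 * cvel ΨRB γ t k)
        = Iz * deriv (fun t' => cvel ΨRB γ t' 2) t
            + (Iy - Ix) * cvel ΨRB γ t 0 * cvel ΨRB γ t 1)) := by
  refine ⟨?_, fun q hq s p w => hamel_eq q hq s p w, ?_⟩
  · intro q h
    constructor <;>
      · ext i j
        fin_cases i <;> fin_cases j <;>
          · simp [ΨRB, ΦRB, Matrix.mul_apply, Fin.sum_univ_three, Matrix.one_fin_three,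
              Matrix.of_apply, Matrix.cons_val_zero, Matrix.cons_val_one, Matrix.head_cons,
              Matrix.cons_val_two, Matrix.tail_cons, Matrix.head_fin_const, Matrix.vecHead,
              Matrix.vecTail, Function.comp, Matrix.cons_val', Matrix.empty_val',
              Matrix.cons_val_fin_one]
            try field_simp
            try ring_nf
            try simp [Real.sin_sq]
            try ring_nf
            try ring
  · intro γ hγ hcos t
    refine ⟨?_, ?_, ?_⟩
    · have e1 : (fun t' => pder (LagRB Ix Iy Iz (γ t')) (cvel ΨRB γ t') 0)
          = fun t' => Ix * cvel ΨRB γ t' 0 := funext fun t' => by rw [pderL]; norm_num [Fin.ext_iff]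
      rw [e1, deriv_const_mul _ ((cvel_diff γ hγ 0) t)]
      simp only [Fin.sum_univ_three, pderLq, pderL, hamel_eq (γ t) (hcos t)]
      norm_num [Fin.ext_iff]
      try ring
    · have e1 : (fun t' => pder (LagRB Ix Iy Iz (γ t')) (cvel ΨRB γ t') 1)
          = fun t' => Iy * cvel ΨRB γ t' 1 := funext fun t' => by rw [pderL]; norm_num [Fin.ext_iff]
      rw [e1, deriv_const_mul _ ((cvel_diff γ hγ 1) t)]
      simp only [Fin.sum_univ_three, pderLq, pderL, hamel_eq (γ t) (hcos t)]
      norm_num [Fin.ext_iff]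
      try ring
    · have e1 : (fun t' => pder (LagRB Ix Iy Iz (γ t')) (cvel ΨRB γ t') 2)
          = fun t' => Iz * cvel ΨRB γ t' 2 := funext fun t' => by rw [pderL]; norm_num [Fin.ext_iff]
      rw [e1, deriv_const_mul _ ((cvel_diff γ hγ 2) t)]
      simp only [Fin.sum_univ_three, pderLq, pderL, hamel_eq (γ t) (hcos t)]
      norm_num [Fin.ext_iff]
      try ring

end
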